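/- arXiv:2005.08117 — 2 statements merged into one kernel-verified Lean document; each statement's English description precedes it below -/
import Mathlib

section
/- Let H be a finite-dimensional complex Hilbert space, let A = {A_x : x ∈ Ω_A} be a sharp observable on H (each A_x an orthogonal projection, ∑_x A_x = I) and let B = {B_y : y ∈ Ω_B} be an observable on H. If for every y ∈ Ω_B one has ∑_{x∈Ω_A} A_x B_y A_x = B_y (i.e. the conditioned observable (B|A) equals B), then A and B commute: A_x B_y = B_y A_x for all x ∈ Ω_A, y ∈ Ω_B. -/
open Matrix
open scoped Classical ComplexOrder

/-- The positive square root of a positive semidefinite matrix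
(junk value `0` on non-positive-semidefinite matrices). -/
noncomputable def sqrtM {ι : Type*} [Fintype ι] [DecidableEq ι] (a : Matrix ι ι ℂ) :
    Matrix ι ι ℂ :=
  if h : a.PosSemidef then
    h.1.eigenvectorUnitary.1 * diagonal ((↑) ∘ (√·) ∘ h.1.eigenvalues) *
      (star h.1.eigenvectorUnitary : Matrix ι ι ℂ)
  else 0

/-- The sequential product `a ∘ b = a^{1/2} b a^{1/2}` of effects. -/
noncomputable def seqProd {ι : Type*} [Fintype ι] [DecidableEq ι] (a b : Matrix ι ι ℂ) :
    Matrix ι ι ℂ :=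
  sqrtM a * b * sqrtM a

/-- An effect: an operator `a` with `0 ≤ a ≤ I` in the Loewner order. -/
def IsEffect {ι : Type*} [Fintype ι] [DecidableEq ι] (a : Matrix ι ι ℂ) : Prop :=
  a.PosSemidef ∧ (1 - a).PosSemidef

private lemma sum_mulVec' {ι γ : Type*} [Fintype ι] (s : Finset γ)
    (f : γ → Matrix ι ι ℂ) (w : ι → ℂ) :
    (∑ z ∈ s, f z) *ᵥ w = ∑ z ∈ s, f z *ᵥ w := by
  induction s using Finset.cons_induction with
  | empty => simp [Matrix.zero_mulVec]
  | cons a s ha ih => simp [Finset.sum_insert ha, Matrix.add_mulVec, ih]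

private lemma dotProduct_sum' {ι γ : Type*} [Fintype ι] (s : Finset γ)
    (f : γ → ι → ℂ) (v : ι → ℂ) :
    v ⬝ᵥ (∑ z ∈ s, f z) = ∑ z ∈ s, v ⬝ᵥ f z := by
  induction s using Finset.cons_induction with
  | empty => simp
  | cons a s ha ih => simp [Finset.sum_insert ha, dotProduct_add, ih]

/-- Projections summing to the identity are mutually orthogonal. -/
private lemma orth_of_sum_one {ι α : Type*} [Fintype ι] [DecidableEq ι] [Fintype α]
    (A : α → Matrix ι ι ℂ)
    (hA_herm : ∀ x, (A x).IsHermitian) (hA_idem : ∀ x, A x * A x = A x)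
    (hA_sum : ∑ x, A x = 1) :
    ∀ x x', x' ≠ x → A x' * A x = 0 := by
  intro x x' hne
  set C : α → Matrix ι ι ℂ := fun z => A z * A x with hC
  have hterm : ∀ z, (C z)ᴴ * C z = A x * A z * A x := by
    intro z
    simp only [hC, conjTranspose_mul, (hA_herm _).eq]
    calc A x * A z * (A z * A x) = A x * (A z * A z) * A x := by noncomm_ring
    _ = A x * A z * A x := by rw [hA_idem]
  have hkey : ∑ z, (C z)ᴴ * C z = A x := by
    simp_rw [hterm]
    rw [← Finset.sum_mul, ← Finset.mul_sum, hA_sum, mul_one, hA_idem]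
  have hx : (C x)ᴴ * C x = A x := by rw [hterm, hA_idem, hA_idem]
  have hzero : ∑ z ∈ Finset.univ.erase x, (C z)ᴴ * C z = 0 := by
    rw [Finset.sum_erase_eq_sub (Finset.mem_univ x), hkey, hx, sub_self]
  -- each quadratic form vanishes
  have hCx' : (C x')ᴴ * C x' = 0 := by
    have hvec : ∀ v : ι → ℂ, ((C x')ᴴ * C x') *ᵥ v = 0 := by
      intro v
      have hq : ∑ z ∈ Finset.univ.erase x,
          star v ⬝ᵥ ((C z)ᴴ * C z) *ᵥ v = 0 := by
        rw [← dotProduct_sum', ← sum_mulVec', hzero, Matrix.zero_mulVec,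
          dotProduct_zero]
      have hnn : ∀ z ∈ Finset.univ.erase x,
          0 ≤ star v ⬝ᵥ ((C z)ᴴ * C z) *ᵥ v := fun z _ =>
        (Matrix.posSemidef_conjTranspose_mul_self (C z)).dotProduct_mulVec_nonneg v
      have hz : star v ⬝ᵥ ((C x')ᴴ * C x') *ᵥ v = 0 :=
        (Finset.sum_eq_zero_iff_of_nonneg hnn).mp hq x'
          (Finset.mem_erase.mpr ⟨hne, Finset.mem_univ _⟩)
      exact ((Matrix.posSemidef_conjTranspose_mul_self (C x')).dotProduct_mulVec_zero_iff
        v).mp hz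
    ext i j
    have := congrFun (hvec (Pi.single j 1)) i
    simpa [Matrix.mulVec_single] using this
  exact Matrix.conjTranspose_mul_self_eq_zero.mp hCx'

/-- If `A` is a sharp observable, `B` is an observable, and the conditioned observable
`(B|A)` equals `B`, then `A` and `B` commute. -/
theorem stmt_0 {ι α β : Type*} [Fintype ι] [DecidableEq ι] [Fintype α] [Fintype β]
    (A : α → Matrix ι ι ℂ) (B : β → Matrix ι ι ℂ)
    (hA_herm : ∀ x, (A x).IsHermitian) (hA_idem : ∀ x, A x * A x = A x)
    (hA_sum : ∑ x, A x = 1)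
    (hB_eff : ∀ y, IsEffect (B y)) (hB_sum : ∑ y, B y = 1)
    (hcond : ∀ y, ∑ x, A x * B y * A x = B y) :
    ∀ x y, A x * B y = B y * A x := by
  have horth := orth_of_sum_one A hA_herm hA_idem hA_sum
  intro x y
  have hleft : A x * B y = A x * B y * A x := by
    conv_lhs => rw [← hcond y]
    rw [Finset.mul_sum]
    rw [Finset.sum_eq_single x]
    · calc A x * (A x * B y * A x) = (A x * A x) * B y * A x := by noncomm_ring
      _ = A x * B y * A x := by rw [hA_idem]
    · intro x' _ hne
      calc A x * (A x' * B y * A x') = (A x * A x') * (B y * A x') := by noncomm_ring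
      _ = 0 := by rw [horth x' x (Ne.symm hne), zero_mul]
    · intro h; exact absurd (Finset.mem_univ x) h
  have hright : B y * A x = A x * B y * A x := by
    conv_lhs => rw [← hcond y]
    rw [Finset.sum_mul]
    rw [Finset.sum_eq_single x]
    · calc A x * B y * A x * A x = A x * B y * (A x * A x) := by noncomm_ring
      _ = A x * B y * A x := by rw [hA_idem]
    · intro x' _ hne
      calc A x' * B y * A x' * A x = (A x' * B y) * (A x' * A x) := by noncomm_ring
      _ = 0 := by rw [horth x x' hne, mul_zero]
    · intro h; exact absurd (Finset.mem_univ x) h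
  rw [hleft, hright]
end

section
/- Let {ψ_i : i = 1,…,d} and {φ_j : j = 1,…,d} be orthonormal bases of a d-dimensional complex Hilbert space, and let A = {P_{ψ_i}} and B = {P_{φ_j}} be the corresponding atomic observables. Then A and B are complementary (i.e. (B_{φ_j} | A_{ψ_i}) = P_{ψ_i}∘P_{φ_j} = (1/d) P_{ψ_i} and P_{φ_j}∘P_{ψ_i} = (1/d) P_{φ_j} for all i, j) if and only if the two bases are mutually unbiased, i.e. |⟨ψ_i, φ_j⟩|² = 1/d for all i, j. -/
open Matrix
open scoped Classical ComplexOrder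

/-- The rank-one projection (atom) `|ψ⟩⟨ψ|` associated to a vector `ψ`. -/
def outer {ι : Type*} (ψ : ι → ℂ) : Matrix ι ι ℂ := vecMulVec ψ (star ψ)


lemma vmv_mul {ι : Type*} [Fintype ι] (u v w x : ι → ℂ) :
    vecMulVec u v * vecMulVec w x = (v ⬝ᵥ w) • vecMulVec u x := by
  ext i j
  simp [mul_apply, vecMulVec_apply, dotProduct, Finset.sum_mul, Finset.mul_sum]
  congr 1; ext k; ring

lemma outer_psd {ι : Type*} [Fintype ι] (ψ : ι → ℂ) : (outer ψ).PosSemidef := by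
  refine PosSemidef.of_dotProduct_mulVec_nonneg ?_ ?_
  · ext i j; simp [outer, vecMulVec_apply, conjTranspose_apply, mul_comm]
  · intro x
    have h1 : (outer ψ) *ᵥ x = (star ψ ⬝ᵥ x) • ψ := by
      ext i
      simp only [outer, mulVec, vecMulVec_apply, dotProduct, Pi.smul_apply, smul_eq_mul,
        Finset.sum_mul]
      exact Finset.sum_congr rfl fun k _ => by ring
    rw [h1]
    have : star x ⬝ᵥ ((star ψ ⬝ᵥ x) • ψ) = star (star x ⬝ᵥ ψ) * (star x ⬝ᵥ ψ) := by
      rw [dotProduct_smul, star_dotProduct, smul_eq_mul]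
    rw [this]
    exact star_mul_self_nonneg _

lemma sqrtM_outer {ι : Type*} [Fintype ι] [DecidableEq ι] (ψ : ι → ℂ)
    (hψ : star ψ ⬝ᵥ ψ = 1) : sqrtM (outer ψ) = outer ψ := by
  have hP := outer_psd ψ
  have hsq : (outer ψ) ^ 2 = outer ψ := by
    rw [pow_two, outer, vmv_mul, hψ, one_smul]
  rw [sqrtM, dif_pos hP]
  have e : hP.1.eigenvectorUnitary.1 * diagonal ((↑) ∘ (√·) ∘ hP.1.eigenvalues) *
      (star hP.1.eigenvectorUnitary : Matrix ι ι ℂ) = hP.1.cfc Real.sqrt := by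
    rw [IsHermitian.cfc]; simp
  rw [e, ← hP.1.cfc_eq]
  have hid : IsIdempotentElem (outer ψ) := by rw [IsIdempotentElem, ← pow_two, hsq]
  have hs := hid.spectrum_subset ℝ
  rw [cfc_congr (g := id), cfc_id ℝ (outer ψ) hP.1.isSelfAdjoint]
  intro x hx
  rcases hs hx with h | h <;> simp_all

lemma seqProd_outer {ι : Type*} [Fintype ι] [DecidableEq ι] (ψ φ : ι → ℂ)
    (hψ : star ψ ⬝ᵥ ψ = 1) :
    seqProd (outer ψ) (outer φ) = ((‖star ψ ⬝ᵥ φ‖ ^ 2 : ℝ) : ℂ) • outer ψ := by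
  rw [seqProd, sqrtM_outer ψ hψ]
  simp only [outer]
  rw [vmv_mul, Matrix.smul_mul, vmv_mul, smul_smul]
  congr 1
  rw [show star φ ⬝ᵥ ψ = star (star ψ ⬝ᵥ φ) from star_dotProduct _ _,
    Complex.star_def, Complex.mul_conj]
  simp [Complex.normSq_eq_norm_sq]

lemma trace_outer {ι : Type*} [Fintype ι] (ψ : ι → ℂ) :
    (outer ψ).trace = star ψ ⬝ᵥ ψ := by
  simp [outer, trace, diag, vecMulVec_apply, dotProduct, mul_comm]

/-- The atomic observables associated to two orthonormal bases of a `d`-dimensional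
complex Hilbert space are complementary if and only if the bases are mutually
unbiased, i.e. `|⟨ψ_i, φ_j⟩|² = 1/d` for all `i`, `j`. -/
theorem stmt_8 {d : ℕ} (ψ φ : Fin d → (Fin d → ℂ))
    (hψ_on : ∀ i j, star (ψ i) ⬝ᵥ ψ j = if i = j then 1 else 0)
    (hφ_on : ∀ i j, star (φ i) ⬝ᵥ φ j = if i = j then 1 else 0)
    (hψ_sum : ∑ i, outer (ψ i) = 1) (hφ_sum : ∑ j, outer (φ j) = 1) :
    (∀ i j, seqProd (outer (ψ i)) (outer (φ j)) = ((1 : ℝ) / d) • outer (ψ i) ∧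
        seqProd (outer (φ j)) (outer (ψ i)) = ((1 : ℝ) / d) • outer (φ j))
      ↔ ∀ i j, ‖star (ψ i) ⬝ᵥ φ j‖ ^ 2 = 1 / (d : ℝ) := by
  have hψ1 : ∀ i, star (ψ i) ⬝ᵥ ψ i = 1 := fun i => by simpa using hψ_on i i
  have hφ1 : ∀ j, star (φ j) ⬝ᵥ φ j = 1 := fun j => by simpa using hφ_on j j
  have hsym : ∀ i j, ‖star (φ j) ⬝ᵥ ψ i‖ = ‖star (ψ i) ⬝ᵥ φ j‖ := by
    intro i j
    rw [star_dotProduct]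
    simp
  have hrsmul : ∀ (r : ℝ) (M : Matrix (Fin d) (Fin d) ℂ), r • M = ((r : ℂ)) • M := by
    intro r M; ext i j; simp
  constructor
  · intro h i j
    have h1 := (h i j).1
    rw [seqProd_outer _ _ (hψ1 i), hrsmul] at h1
    have h2 := congrArg Matrix.trace h1
    rw [Matrix.trace_smul, Matrix.trace_smul, trace_outer, hψ1 i, smul_eq_mul,
      smul_eq_mul, mul_one, mul_one] at h2
    have := Complex.ofReal_inj.mp h2
    simpa using this
  · intro h i j
    constructor
    · rw [seqProd_outer _ _ (hψ1 i), h i j, hrsmul]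
    · rw [seqProd_outer _ _ (hφ1 j), hsym i j, h i j, hrsmul]
end
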